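/- Let H be a real n₁ × n₂ matrix. The following are equivalent: (i) there exist an integer N and unit vectors u_1,…,u_{n₁} ∈ ℝ^N and v_1,…,v_{n₂} ∈ ℝ^N with H_{ij} = ⟨u_i, v_j⟩ for all i, j; (ii) there exists a symmetric positive semidefinite matrix M ∈ ℝ^{(n₁+n₂)×(n₁+n₂)} with all diagonal entries equal to 1 whose top-right n₁ × n₂ block is H (that is, M_{i, n₁+j} = H_{ij} for all i ∈ [n₁], j ∈ [n₂]). Consequently, the set of matrices H satisfying (i) is a convex set. -/

import Mathlib

open Finset Matrix

lemma psd_comb {n : ℕ} {M₁ M₂ : Matrix (Fin n) (Fin n) ℝ} (h₁ : M₁.PosSemidef)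
    (h₂ : M₂.PosSemidef) {a b : ℝ} (ha : 0 ≤ a) (hb : 0 ≤ b) :
    (a • M₁ + b • M₂).PosSemidef := by
  constructor
  · show (a • M₁ + b • M₂)ᴴ = _
    rw [Matrix.conjTranspose_add, Matrix.conjTranspose_smul, Matrix.conjTranspose_smul,
      h₁.1, h₂.1, star_trivial, star_trivial]
  · intro x
    have := h₁.2 x
    have := h₂.2 x
    exact ((h₁.smul ha).add (h₂.smul hb)).2 x

open scoped MatrixOrder in
theorem key (n₁ n₂ : ℕ) (H : Matrix (Fin n₁) (Fin n₂) ℝ) :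
      (∃ N : ℕ, ∃ u : Fin n₁ → (Fin N → ℝ), ∃ v : Fin n₂ → (Fin N → ℝ),
        (∀ i, ∑ n, (u i n) ^ 2 = 1) ∧ (∀ j, ∑ n, (v j n) ^ 2 = 1) ∧
        ∀ i j, H i j = ∑ n, u i n * v j n) ↔
      (∃ M : Matrix (Fin (n₁ + n₂)) (Fin (n₁ + n₂)) ℝ,
        M.PosSemidef ∧ (∀ i, M i i = 1) ∧
        ∀ i j, M (Fin.castAdd n₂ i) (Fin.natAdd n₁ j) = H i j) := by
  constructor
  · rintro ⟨N, u, v, hu, hv, hH⟩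
    set w : Fin (n₁ + n₂) → Fin N → ℝ := Fin.addCases u v with hw
    set A : Matrix (Fin (n₁ + n₂)) (Fin N) ℝ := Matrix.of w with hA
    refine ⟨A * Aᴴ, Matrix.posSemidef_self_mul_conjTranspose A, ?_, ?_⟩
    · intro k
      induction k using Fin.addCases with
      | left i =>
        simp [Matrix.mul_apply, hA, hw, ← sq, hu i]
      | right j =>
        simp [Matrix.mul_apply, hA, hw, ← sq, hv j]
    · intro i j
      simp [Matrix.mul_apply, hA, hw, hH i j]
  · rintro ⟨M, hM, hdiag, hblk⟩
    have hsq : CFC.sqrt M * CFC.sqrt M = M := CFC.sqrt_mul_sqrt_self M hM.nonneg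
    have hSp : (CFC.sqrt M).PosSemidef := (CFC.sqrt_nonneg M).posSemidef
    have hsym : ∀ k l, CFC.sqrt M k l = CFC.sqrt M l k := fun k l => by
      simpa using (hSp.1.apply k l).symm
    have hMS : ∀ k l, M k l = ∑ n, CFC.sqrt M k n * CFC.sqrt M l n := by
      intro k l
      conv_lhs => rw [← hsq]
      rw [Matrix.mul_apply]
      exact Finset.sum_congr rfl fun n _ => by rw [hsym n l]
    refine ⟨n₁ + n₂, fun i => CFC.sqrt M (Fin.castAdd n₂ i), fun j => CFC.sqrt M (Fin.natAdd n₁ j), ?_, ?_, ?_⟩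
    · intro i
      simp_rw [sq, ← hMS]
      exact hdiag _
    · intro j
      simp_rw [sq, ← hMS]
      exact hdiag _
    · intro i j
      rw [← hblk i j, hMS]

theorem stmt_8 (n₁ n₂ : ℕ) :
    (∀ H : Matrix (Fin n₁) (Fin n₂) ℝ,
      (∃ N : ℕ, ∃ u : Fin n₁ → (Fin N → ℝ), ∃ v : Fin n₂ → (Fin N → ℝ),
        (∀ i, ∑ n, (u i n) ^ 2 = 1) ∧ (∀ j, ∑ n, (v j n) ^ 2 = 1) ∧
        ∀ i j, H i j = ∑ n, u i n * v j n) ↔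
      (∃ M : Matrix (Fin (n₁ + n₂)) (Fin (n₁ + n₂)) ℝ,
        M.PosSemidef ∧ (∀ i, M i i = 1) ∧
        ∀ i j, M (Fin.castAdd n₂ i) (Fin.natAdd n₁ j) = H i j)) ∧
    Convex ℝ {H : Matrix (Fin n₁) (Fin n₂) ℝ |
      ∃ N : ℕ, ∃ u : Fin n₁ → (Fin N → ℝ), ∃ v : Fin n₂ → (Fin N → ℝ),
        (∀ i, ∑ n, (u i n) ^ 2 = 1) ∧ (∀ j, ∑ n, (v j n) ^ 2 = 1) ∧
        ∀ i j, H i j = ∑ n, u i n * v j n} := by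
  refine ⟨key n₁ n₂, ?_⟩
  intro H₁ h₁ H₂ h₂ a b ha hb hab
  rw [Set.mem_setOf_eq, key n₁ n₂] at h₁ h₂ ⊢
  obtain ⟨M₁, hp₁, hd₁, hb₁⟩ := h₁
  obtain ⟨M₂, hp₂, hd₂, hb₂⟩ := h₂
  refine ⟨a • M₁ + b • M₂, psd_comb hp₁ hp₂ ha hb, ?_, ?_⟩
  · intro i
    simp [Matrix.add_apply, hd₁ i, hd₂ i, hab]
  · intro i j
    simp [Matrix.add_apply, hb₁ i j, hb₂ i j]
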